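/- The rank of the adjacency matrix of a cograph equals the number of distinct nonzero rows of that matrix. -/

import Mathlib

open scoped Classical

noncomputable section

/-- The real adjacency matrix of a finite simple graph. -/
def adjM {V : Type*} [Fintype V] (G : SimpleGraph V) : Matrix V V ℝ :=
  G.adjMatrix ℝ

/-- The multiplicity of `μ` as an eigenvalue of the adjacency matrix of `G`
(the dimension of the corresponding eigenspace; `0` if `μ` is not an eigenvalue). -/
def eigMult {V : Type*} [Fintype V] (G : SimpleGraph V) (μ : ℝ) : ℕ :=
  Module.finrank ℝ (Module.End.eigenspace (Matrix.toLin' (adjM G)) μ)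

/-- `μ` is an eigenvalue of the adjacency matrix of `G`. -/
def HasEig {V : Type*} [Fintype V] (G : SimpleGraph V) (μ : ℝ) : Prop :=
  Module.End.HasEigenvalue (Matrix.toLin' (adjM G)) μ

/-- A cograph: no induced path on four vertices. -/
def IsCograph {V : Type*} (G : SimpleGraph V) : Prop :=
  IsEmpty (SimpleGraph.pathGraph 4 ↪g G)

/-- A duplication class: a maximal set of more than one vertex, all with the same
open neighborhood. -/
def IsDupClass {V : Type*} (G : SimpleGraph V) (S : Set V) : Prop :=
  1 < S.ncard ∧ (∀ u ∈ S, ∀ v ∈ S, G.neighborSet u = G.neighborSet v) ∧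
    ∀ T : Set V, S ⊆ T → (∀ u ∈ T, ∀ v ∈ T, G.neighborSet u = G.neighborSet v) → T = S

/-- A coduplication class: a maximal set of more than one vertex, all with the same
closed neighborhood. -/
def IsCodupClass {V : Type*} (G : SimpleGraph V) (S : Set V) : Prop :=
  1 < S.ncard ∧
    (∀ u ∈ S, ∀ v ∈ S, insert u (G.neighborSet u) = insert v (G.neighborSet v)) ∧
    ∀ T : Set V, S ⊆ T →
      (∀ u ∈ T, ∀ v ∈ T, insert u (G.neighborSet u) = insert v (G.neighborSet v)) → T = S






/-- no induced P4, as a first-order statement -/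
def P4Free {V : Type*} (G : SimpleGraph V) : Prop :=
  ∀ a b c d : V, G.Adj a b → G.Adj b c → G.Adj c d →
    ¬G.Adj a c → ¬G.Adj a d → ¬G.Adj b d → False

lemma isCograph_p4free {V : Type*} (G : SimpleGraph V) (h : IsCograph G) : P4Free G := by
  intro a b c d hab hbc hcd nac nad nbd
  have hba := hab.symm; have hcb := hbc.symm; have hdc := hcd.symm
  have hab' : a ≠ b := hab.ne
  have hbc' : b ≠ c := hbc.ne
  have hcd' : c ≠ d := hcd.ne
  have hac' : a ≠ c := by rintro rfl; exact nad hcd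
  have hbd' : b ≠ d := by rintro rfl; exact nad hab
  have had' : a ≠ d := by rintro rfl; exact nac hdc
  have nca : ¬G.Adj c a := fun h => nac h.symm
  have nda : ¬G.Adj d a := fun h => nad h.symm
  have ndb : ¬G.Adj d b := fun h => nbd h.symm
  have hba' : b ≠ a := hab'.symm
  have hcb' : c ≠ b := hbc'.symm
  have hdc' : d ≠ c := hcd'.symm
  have hca' : c ≠ a := hac'.symm
  have hdb' : d ≠ b := hbd'.symm
  have hda' : d ≠ a := had'.symm
  refine h.elim ⟨⟨![a,b,c,d], ?_⟩, ?_⟩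
  · intro i j hij
    fin_cases i <;> fin_cases j <;> first
      | rfl
      | (exfalso; revert hij; simpa using by assumption)
  · intro i j
    fin_cases i <;> fin_cases j <;>
      simp only [SimpleGraph.pathGraph_adj, Matrix.cons_val', Matrix.cons_val_zero,
        Matrix.cons_val_one, Matrix.head_cons, Matrix.head_fin_const, Matrix.cons_val_fin_one,
        Matrix.empty_val', Fin.isValue] <;> first
      | (exact iff_of_true (by assumption) (by decide))
      | (exact iff_of_false (by assumption) (by decide))
      | (exact iff_of_false (G.irrefl) (by decide))




lemma P4Free.compl {V : Type*} {G : SimpleGraph V} (h : P4Free G) : P4Free Gᶜ := by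
  intro a b c d hab hbc hcd nac nad nbd
  -- derive distinctness in the complement graph
  have hab' : a ≠ b := hab.ne
  have hbc' : b ≠ c := hbc.ne
  have hcd' : c ≠ d := hcd.ne
  have hac' : a ≠ c := by rintro rfl; exact nad hcd
  have hbd' : b ≠ d := by rintro rfl; exact nad hab
  have had' : a ≠ d := by rintro rfl; exact nac hcd.symm
  -- complement adjacencies become G adjacencies / non-adjacencies
  rw [SimpleGraph.compl_adj] at hab hbc hcd
  have gac : G.Adj a c := by
    by_contra hx; exact nac ((SimpleGraph.compl_adj G a c).2 ⟨hac', hx⟩)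
  have gad : G.Adj a d := by
    by_contra hx; exact nad ((SimpleGraph.compl_adj G a d).2 ⟨had', hx⟩)
  have gbd : G.Adj b d := by
    by_contra hx; exact nbd ((SimpleGraph.compl_adj G b d).2 ⟨hbd', hx⟩)
  -- b - d - a - c is an induced path in G
  exact h b d a c gbd gad.symm gac (fun hx => hab.2 hx.symm) hbc.2 (fun hx => hcd.2 hx.symm)

lemma P4Free.induce {V : Type*} {G : SimpleGraph V} (h : P4Free G) (s : Set V) :
    P4Free (G.induce s) := by
  intro a b c d hab hbc hcd nac nad nbd
  simp only [SimpleGraph.comap_adj, Function.Embedding.coe_subtype] at *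
  exact h a b c d hab hbc hcd nac nad nbd

/-- a set with no edges leaving it, plus a vertex outside, kills connectivity -/
lemma not_conn_of_separated {V : Type*} {G : SimpleGraph V} (S : Set V) (a b : V)
    (ha : a ∈ S) (hb : b ∉ S) (h : ∀ x ∈ S, ∀ y, y ∉ S → ¬G.Adj x y) :
    ¬G.Connected := by
  intro hc
  obtain ⟨w⟩ := hc.preconnected a b
  clear hc
  induction w with
  | nil => exact hb ha
  | @cons u v _ huv p ih =>
    by_cases hv : v ∈ S
    · exact ih hv hb
    · exact h u ha v hv huv


/-- along a walk from a ¬P vertex to a P vertex there is an adjacent pair switching P,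
reachable from the start -/
lemma walk_switch {U : Type*} {K : SimpleGraph U} (P : U → Prop) :
    ∀ {x y : U} (_ : K.Walk x y), ¬P x → P y →
      ∃ p q : U, K.Adj p q ∧ ¬P p ∧ P q ∧ K.Reachable x p := by
  intro x y w
  induction w with
  | nil => intro h1 h2; exact absurd h2 h1
  | @cons u v _ huv p ih =>
    intro h1 h2
    by_cases hv : P v
    · exact ⟨u, v, huv, h1, hv, SimpleGraph.Reachable.refl u⟩
    · obtain ⟨p', q', h3, h4, h5, h6⟩ := ih hv h2
      exact ⟨p', q', h3, h4, h5, (huv.reachable).trans h6⟩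


lemma seinsche_step {W : Type*} (G : SimpleGraph W) (hP4 : P4Free G) (v : W)
    (hW : ∃ w, w ≠ v) (hdis : ¬(G.induce ({v}ᶜ : Set W)).Connected) :
    ¬G.Connected ∨ ¬Gᶜ.Connected := by
  set A : Set W := {v}ᶜ with hA
  set K := G.induce A with hK
  have hKadj : ∀ (p q : ↥A), K.Adj p q ↔ G.Adj ↑p ↑q := by
    intro p q; simp [hK]
  by_cases H : ∃ w : ↥A, ∀ u : ↥A, K.Reachable w u → ¬G.Adj v ↑u
  · obtain ⟨w, hw⟩ := H
    left
    refine not_conn_of_separated {x : W | ∃ h : x ∈ A, K.Reachable w ⟨x, h⟩} ↑w v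
      ⟨w.2, by exact SimpleGraph.Reachable.refl w⟩ ?_ ?_
    · rintro ⟨h, -⟩
      exact (Set.mem_compl_singleton_iff.mp h) rfl
    · rintro x ⟨hx, hr⟩ y hy hadj
      by_cases hyv : y = v
      · subst hyv
        exact hw ⟨x, hx⟩ hr hadj.symm
      · have hyA : y ∈ A := Set.mem_compl_singleton_iff.mpr hyv
        have : K.Adj ⟨x, hx⟩ ⟨y, hyA⟩ := (hKadj _ _).mpr hadj
        exact hy ⟨hyA, hr.trans this.reachable⟩
  · push_neg at H
    -- v is adjacent to everything else
    have hall : ∀ x, x ≠ v → G.Adj v x := by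
      by_contra hc
      push_neg at hc
      obtain ⟨x, hxv, hnadj⟩ := hc
      set x' : ↥A := ⟨x, Set.mem_compl_singleton_iff.mpr hxv⟩ with hx'
      obtain ⟨y, hry, hady⟩ := H x'
      obtain ⟨wk⟩ := hry
      obtain ⟨p, q, hpq, hnp, hq, hxp⟩ :=
        walk_switch (fun u : ↥A => G.Adj v ↑u) wk (by simpa [hx'] using hnadj) hady
      -- K is disconnected: get two non-reachable vertices
      have hne : Nonempty ↥A := ⟨x'⟩
      have hnpre : ¬K.Preconnected := fun hp =>
        hdis ((SimpleGraph.connected_iff K).mpr ⟨hp, hne⟩)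
      obtain ⟨a, b, hab⟩ : ∃ a b : ↥A, ¬K.Reachable a b := by
        unfold SimpleGraph.Preconnected at hnpre
        push_neg at hnpre
        exact hnpre
      -- choose c not reachable from x'
      obtain ⟨c, hc2⟩ : ∃ c : ↥A, ¬K.Reachable x' c := by
        by_cases hca : K.Reachable x' a
        · exact ⟨b, fun h => hab (hca.symm.trans h)⟩
        · exact ⟨a, hca⟩
      obtain ⟨z, hrz, hadz⟩ := H c
      have hnz : ¬K.Reachable x' z := fun h => hc2 (h.trans hrz.symm)
      have h1 : ¬K.Adj p z := fun h => hnz (hxp.trans h.reachable)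
      have h2 : ¬K.Adj q z := fun h => hnz (hxp.trans (hpq.reachable.trans h.reachable))
      exact hP4 ↑p ↑q v ↑z ((hKadj _ _).mp hpq) hq.symm hadz
        (fun h => hnp h.symm)
        (fun h => h1 ((hKadj p z).mpr h))
        (fun h => h2 ((hKadj q z).mpr h))
    · right
      obtain ⟨w, hwv⟩ := hW
      refine not_conn_of_separated {v} v w rfl hwv ?_
      rintro x rfl y hy hadj
      rw [SimpleGraph.compl_adj] at hadj
      exact hadj.2 (hall y (fun h => hadj.1 h.symm))


lemma induce_compl_eq {W : Type*} (G : SimpleGraph W) (A : Set W) :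
    (G.induce A)ᶜ = Gᶜ.induce A := by
  ext a b
  simp [SimpleGraph.compl_adj, Subtype.coe_ne_coe]

lemma seinsche_aux : ∀ (n : ℕ) {W : Type*} [Fintype W] (G : SimpleGraph W),
    P4Free G → Fintype.card W = n → 1 < n → (¬G.Connected ∨ ¬Gᶜ.Connected) := by
  intro n
  induction n using Nat.strong_induction_on with
  | _ n ih =>
    intro W _ G hP4 hcard h2
    have hnt : Nontrivial W := Fintype.one_lt_card_iff_nontrivial.mp (hcard ▸ h2)
    rcases Nat.lt_or_ge n 3 with h3 | h3
    · -- n = 2 : two vertices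
      interval_cases n
      obtain ⟨u, w, huw, huniv⟩ := Finset.card_eq_two.mp (by simpa [Finset.card_univ] using hcard : (Finset.univ : Finset W).card = 2)
      have hmem : ∀ x : W, x = u ∨ x = w := by
        intro x
        have : x ∈ ({u, w} : Finset W) := by rw [← huniv]; exact Finset.mem_univ x
        simpa using this
      by_cases hadj : G.Adj u w
      · right
        refine not_conn_of_separated {u} u w rfl (by simpa using huw.symm) ?_
        rintro x rfl y hy hc
        rw [SimpleGraph.compl_adj] at hc
        rcases hmem y with rfl | rfl
        · exact hc.1 rfl
        · exact hc.2 hadj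
      · left
        refine not_conn_of_separated {u} u w rfl (by simpa using huw.symm) ?_
        rintro x rfl y hy hc
        rcases hmem y with rfl | rfl
        · exact G.irrefl hc
        · exact hadj hc
    · -- n ≥ 3
      obtain ⟨v⟩ : Nonempty W := Fintype.card_pos_iff.mp (by omega)
      have hcardA : Fintype.card ↥({v}ᶜ : Set W) = n - 1 := by
        rw [← hcard]
        rw [Fintype.card_compl_set]
        simp
      have hex : ∃ w, w ≠ v := by
        obtain ⟨w, hw⟩ := exists_ne v
        exact ⟨w, hw⟩
      rcases ih (n-1) (by omega) (G.induce ({v}ᶜ : Set W)) (hP4.induce _) hcardA (by omega)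
        with hd | hd
      · exact seinsche_step G hP4 v hex hd
      · rw [induce_compl_eq] at hd
        rcases seinsche_step Gᶜ hP4.compl v hex hd with h | h
        · exact Or.inr h
        · rw [compl_compl] at h
          exact Or.inl h

lemma seinsche {W : Type*} [Fintype W] (G : SimpleGraph W) (hP4 : P4Free G)
    (h2 : 1 < Fintype.card W) : ¬G.Connected ∨ ¬Gᶜ.Connected :=
  seinsche_aux (Fintype.card W) G hP4 rfl h2


lemma partition_of_not_connected {V : Type*} [Fintype V] {s : Finset V}
    (H : SimpleGraph ↥(↑s : Set V)) (hne : s.Nonempty) (h : ¬H.Connected) :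
    ∃ s1 s2 : Finset V, s1 ∪ s2 = s ∧ Disjoint s1 s2 ∧ s1.Nonempty ∧ s2.Nonempty ∧
      ∀ (x y : ↥(↑s : Set V)), ↑x ∈ s1 → ↑y ∈ s2 → ¬H.Adj x y := by
  have hne' : Nonempty ↥(↑s : Set V) := by
    obtain ⟨v, hv⟩ := hne
    exact ⟨⟨v, by simpa using hv⟩⟩
  have hnpre : ¬H.Preconnected := fun hp => h ((SimpleGraph.connected_iff H).mpr ⟨hp, hne'⟩)
  obtain ⟨a, b, hab⟩ : ∃ a b : ↥(↑s : Set V), ¬H.Reachable a b := by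
    unfold SimpleGraph.Preconnected at hnpre
    push_neg at hnpre
    exact hnpre
  classical
  refine ⟨s.filter (fun v => ∃ h : v ∈ (↑s : Set V), H.Reachable a ⟨v, h⟩),
    s.filter (fun v => ¬∃ h : v ∈ (↑s : Set V), H.Reachable a ⟨v, h⟩),
    Finset.filter_union_filter_not_eq _ s, Finset.disjoint_filter_filter_not s s _,
    ⟨↑a, Finset.mem_filter.mpr ⟨by simpa using a.2, a.2, by simpa using SimpleGraph.Reachable.refl a⟩⟩,
    ⟨↑b, Finset.mem_filter.mpr ⟨by simpa using b.2, fun ⟨h', hr⟩ => hab (by simpa using hr)⟩⟩,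
    ?_⟩
  intro x y hx hy hadj
  obtain ⟨hx1, hx2⟩ := Finset.mem_filter.mp hx
  obtain ⟨hxs, hr⟩ := hx2
  have : H.Reachable a y := (by simpa using hr : H.Reachable a x).trans hadj.reachable
  exact (Finset.mem_filter.mp hy).2 ⟨y.2, by simpa using this⟩

lemma finset_partition {V : Type*} [Fintype V] (G : SimpleGraph V) (hP4 : P4Free G)
    (s : Finset V) (hcard : 1 < s.card) :
    (∃ s1 s2 : Finset V, s1 ∪ s2 = s ∧ Disjoint s1 s2 ∧ s1.Nonempty ∧ s2.Nonempty ∧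
      ∀ a ∈ s1, ∀ b ∈ s2, ¬G.Adj a b) ∨
    (∃ s1 s2 : Finset V, s1 ∪ s2 = s ∧ Disjoint s1 s2 ∧ s1.Nonempty ∧ s2.Nonempty ∧
      ∀ a ∈ s1, ∀ b ∈ s2, G.Adj a b) := by
  have hne : s.Nonempty := Finset.card_pos.mp (by omega)
  have hcard' : 1 < Fintype.card ↥(↑s : Set V) := by
    have : Fintype.card ↥(↑s : Set V) = s.card := by simp
    omega
  rcases seinsche (G.induce (↑s : Set V)) (hP4.induce _) hcard' with hd | hd
  · obtain ⟨s1, s2, hu, hdj, h1, h2, hcross⟩ := partition_of_not_connected _ hne hd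
    refine Or.inl ⟨s1, s2, hu, hdj, h1, h2, ?_⟩
    intro x hx y hy hadj
    have hxs : x ∈ s := by rw [← hu]; exact Finset.mem_union_left _ hx
    have hys : y ∈ s := by rw [← hu]; exact Finset.mem_union_right _ hy
    exact hcross ⟨x, by simpa using hxs⟩ ⟨y, by simpa using hys⟩ hx hy (by simpa using hadj)
  · obtain ⟨s1, s2, hu, hdj, h1, h2, hcross⟩ := partition_of_not_connected _ hne hd
    refine Or.inr ⟨s1, s2, hu, hdj, h1, h2, ?_⟩
    intro x hx y hy
    have hxs : x ∈ s := by rw [← hu]; exact Finset.mem_union_left _ hx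
    have hys : y ∈ s := by rw [← hu]; exact Finset.mem_union_right _ hy
    have hne2 : x ≠ y := by
      intro h; subst h; exact (Finset.disjoint_left.mp hdj hx) hy
    have := hcross ⟨x, by simpa using hxs⟩ ⟨y, by simpa using hys⟩ hx hy
    rw [SimpleGraph.compl_adj] at this
    push_neg at this
    have := this (by simpa [Subtype.ext_iff] using hne2)
    simpa using this

open scoped Classical
noncomputable section

variable {V : Type*} [Fintype V]

/-- partial row sum of the adjacency matrix over a finset -/
def rsum (G : SimpleGraph V) (t : Finset V) (x : V → ℝ) (v : V) : ℝ :=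
  ∑ u ∈ t.filter (fun u => G.Adj v u), x u

/-- "the rows of `G` restricted to `t` are linearly independent" -/
def InjOn (G : SimpleGraph V) (t : Finset V) : Prop :=
  ∀ x : V → ℝ, (∀ v ∈ t, rsum G t x v = 0) → ∀ v ∈ t, x v = 0

/-- "the all-ones vector is in the span, with coefficient sum exceeding 1" -/
def Solv (G : SimpleGraph V) (t : Finset V) : Prop :=
  ∃ x : V → ℝ, (∀ v, v ∉ t → x v = 0) ∧ (∀ v ∈ t, rsum G t x v = 1) ∧ 1 < ∑ v ∈ t, x v

variable {G : SimpleGraph V}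

lemma rsum_split {s s1 s2 : Finset V} (hu : s1 ∪ s2 = s) (hdj : Disjoint s1 s2)
    (x : V → ℝ) (v : V) : rsum G s x v = rsum G s1 x v + rsum G s2 x v := by
  unfold rsum
  rw [← hu, Finset.filter_union,
    Finset.sum_union (hdj.mono (Finset.filter_subset _ _) (Finset.filter_subset _ _))]

lemma rsum_all {t : Finset V} {v : V} (h : ∀ b ∈ t, G.Adj v b) (x : V → ℝ) :
    rsum G t x v = ∑ u ∈ t, x u := by
  unfold rsum; rw [Finset.filter_true_of_mem h]

lemma rsum_none {t : Finset V} {v : V} (h : ∀ b ∈ t, ¬G.Adj v b) (x : V → ℝ) :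
    rsum G t x v = 0 := by
  unfold rsum; rw [Finset.filter_false_of_mem h, Finset.sum_empty]

lemma rsum_zero {t : Finset V} (x : V → ℝ) (h : ∀ u ∈ t, x u = 0) (v : V) :
    rsum G t x v = 0 :=
  Finset.sum_eq_zero fun u hu => h u (Finset.mem_filter.mp hu).1

lemma rsum_add (t : Finset V) (x y : V → ℝ) (v : V) :
    rsum G t (x + y) v = rsum G t x v + rsum G t y v := by
  unfold rsum; simp [Finset.sum_add_distrib]

lemma rsum_smul (t : Finset V) (c : ℝ) (x : V → ℝ) (v : V) :
    rsum G t (c • x) v = c * rsum G t x v := by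
  unfold rsum; simp [Finset.mul_sum]

lemma rsum_erase {t : Finset V} {u v : V} (h : ¬G.Adj v u) (x : V → ℝ) :
    rsum G t x v = rsum G (t.erase u) x v := by
  unfold rsum
  congr 1
  ext w
  simp only [Finset.mem_filter, Finset.mem_erase]
  constructor
  · rintro ⟨hw, ha⟩
    exact ⟨⟨fun hq => h (hq ▸ ha), hw⟩, ha⟩
  · rintro ⟨⟨-, hw⟩, ha⟩
    exact ⟨hw, ha⟩

/-- indicator function -/
def ind (u : V) : V → ℝ := fun v => if v = u then 1 else 0

lemma sum_ind {t : Finset V} {u : V} (h : u ∈ t) : ∑ v ∈ t, ind u v = 1 := by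
  unfold ind
  rw [Finset.sum_ite_eq' t u (fun _ => (1:ℝ))]
  simp [h]

lemma ind_zero {u v : V} (h : v ≠ u) : ind u v = 0 := by unfold ind; simp [h]

lemma rsum_ind {t : Finset V} {u : V} (v : V) (h : ¬G.Adj v u) (x := ind u) :
    rsum G t (ind u) v = 0 := by
  apply Finset.sum_eq_zero
  intro w hw
  obtain ⟨hwt, hadj⟩ := Finset.mem_filter.mp hw
  exact ind_zero (fun hq => h (hq ▸ hadj))

lemma sum_extend {t s : Finset V} (hts : t ⊆ s) (x : V → ℝ) (hx : ∀ v, v ∉ t → x v = 0) :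
    ∑ v ∈ s, x v = ∑ v ∈ t, x v :=
  (Finset.sum_subset hts fun u _ hu => hx u hu).symm
end

section Assembly
variable {V : Type*} [Fintype V] {G : SimpleGraph V} {s s1 s2 : Finset V}

lemma join_AA (hu : s1 ∪ s2 = s) (hdj : Disjoint s1 s2)
    (hcross : ∀ a ∈ s1, ∀ b ∈ s2, G.Adj a b)
    (I1 : InjOn G s1) (Sv1 : Solv G s1) (I2 : InjOn G s2) (Sv2 : Solv G s2) :
    InjOn G s ∧ Solv G s := by
  obtain ⟨x1, hx1s, hx1r, hα1⟩ := Sv1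
  obtain ⟨x2, hx2s, hx2r, hα2⟩ := Sv2
  set α1 := ∑ v ∈ s1, x1 v with hα1d
  set α2 := ∑ v ∈ s2, x2 v with hα2d
  have hs1s : s1 ⊆ s := hu ▸ Finset.subset_union_left
  have hs2s : s2 ⊆ s := hu ▸ Finset.subset_union_right
  have hx2z1 : ∀ u ∈ s1, x2 u = 0 := fun u hu' => hx2s u (Finset.disjoint_left.mp hdj hu')
  have hx1z2 : ∀ u ∈ s2, x1 u = 0 := fun u hu' => hx1s u (Finset.disjoint_right.mp hdj hu')
  have hD : 0 < α1 * α2 - 1 := by nlinarith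
  -- row sums in the join
  have hrow1 : ∀ (x : V → ℝ), ∀ v ∈ s1, rsum G s x v = rsum G s1 x v + ∑ u ∈ s2, x u := by
    intro x v hv
    rw [rsum_split hu hdj, rsum_all (fun b hb => hcross v hv b hb)]
  have hrow2 : ∀ (x : V → ℝ), ∀ v ∈ s2, rsum G s x v = (∑ u ∈ s1, x u) + rsum G s2 x v := by
    intro x v hv
    rw [rsum_split hu hdj, rsum_all (fun b hb => (hcross b hb v hv).symm)]
  constructor
  · -- injectivity
    intro x hx
    set T1 := ∑ u ∈ s1, x u with hT1d
    set T2 := ∑ u ∈ s2, x u with hT2d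
    have key1 : ∀ v ∈ s1, x v = -T2 * x1 v := by
      have hz := I1 (x + T2 • x1) ?_
      · intro v hv
        have := hz v hv
        simp only [Pi.add_apply, Pi.smul_apply, smul_eq_mul] at this
        linarith
      · intro v hv
        rw [rsum_add, rsum_smul, hx1r v hv]
        have h0 := hx v (hs1s hv)
        rw [hrow1 x v hv] at h0
        linarith
    have key2 : ∀ v ∈ s2, x v = -T1 * x2 v := by
      have hz := I2 (x + T1 • x2) ?_
      · intro v hv
        have := hz v hv
        simp only [Pi.add_apply, Pi.smul_apply, smul_eq_mul] at this
        linarith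
      · intro v hv
        rw [rsum_add, rsum_smul, hx2r v hv]
        have h0 := hx v (hs2s hv)
        rw [hrow2 x v hv] at h0
        linarith
    have eT1 : T1 = -T2 * α1 := by
      rw [hT1d, Finset.sum_congr rfl key1, hα1d, ← Finset.mul_sum]
    have eT2 : T2 = -T1 * α2 := by
      rw [hT2d, Finset.sum_congr rfl key2, hα2d, ← Finset.mul_sum]
    have hT10 : T1 = 0 := by
      have e : T1 * (α1 * α2 - 1) = 0 := by
        linear_combination -eT1 + α1 * eT2
      rcases mul_eq_zero.mp e with h | h
      · exact h
      · exact absurd h (by linarith)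
    have hT20 : T2 = 0 := by rw [eT2, hT10]; ring
    intro v hv
    rcases Finset.mem_union.mp (hu ▸ hv) with h | h
    · rw [key1 v h, hT20]; ring
    · rw [key2 v h, hT10]; ring
  · -- solvability
    set D := α1 * α2 - 1 with hDd
    set c1 := (α2 - 1) / D with hc1d
    set c2 := (α1 - 1) / D with hc2d
    refine ⟨c1 • x1 + c2 • x2, ?_, ?_, ?_⟩
    · intro v hv
      simp only [Pi.add_apply, Pi.smul_apply, smul_eq_mul]
      rw [hx1s v (fun h => hv (hs1s h)), hx2s v (fun h => hv (hs2s h))]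
      ring
    · intro v hv
      rcases Finset.mem_union.mp (hu ▸ hv) with h | h
      · rw [hrow1 _ v h, rsum_add, rsum_smul, rsum_smul, hx1r v h,
          rsum_zero _ hx2z1]
        have e2 : ∑ u ∈ s2, (c1 • x1 + c2 • x2) u = c2 * α2 := by
          simp only [Pi.add_apply, Pi.smul_apply, smul_eq_mul]
          rw [Finset.sum_add_distrib, ← Finset.mul_sum, ← Finset.mul_sum,
            Finset.sum_eq_zero hx1z2, hα2d]
          ring
        rw [e2, hc1d, hc2d]
        field_simp
        ring
      · rw [hrow2 _ v h, rsum_add, rsum_smul, rsum_smul, hx2r v h,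
          rsum_zero _ hx1z2]
        have e2 : ∑ u ∈ s1, (c1 • x1 + c2 • x2) u = c1 * α1 := by
          simp only [Pi.add_apply, Pi.smul_apply, smul_eq_mul]
          rw [Finset.sum_add_distrib, ← Finset.mul_sum, ← Finset.mul_sum,
            Finset.sum_eq_zero hx2z1, hα1d]
          ring
        rw [e2, hc1d, hc2d]
        field_simp
        ring
    · have e : ∑ v ∈ s, (c1 • x1 + c2 • x2) v = c1 * α1 + c2 * α2 := by
        simp only [Pi.add_apply, Pi.smul_apply, smul_eq_mul]
        rw [Finset.sum_add_distrib, ← Finset.mul_sum, ← Finset.mul_sum,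
          sum_extend hs1s x1 hx1s, sum_extend hs2s x2 hx2s, hα1d, hα2d]
      rw [e, hc1d, hc2d]
      rw [div_mul_eq_mul_div, div_mul_eq_mul_div, ← add_div, lt_div_iff₀ hD]
      nlinarith
end Assembly

section Assembly2
variable {V : Type*} [Fintype V] {G : SimpleGraph V} {s s1 s2 : Finset V}

lemma join_AB (hu : s1 ∪ s2 = s) (hdj : Disjoint s1 s2)
    (hcross : ∀ a ∈ s1, ∀ b ∈ s2, G.Adj a b)
    (I1 : InjOn G s1) (Sv1 : Solv G s1)
    {u2 : V} (hu2 : u2 ∈ s2) (hiso2 : ∀ w ∈ s2, ¬G.Adj u2 w)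
    (I2' : InjOn G (s2.erase u2)) :
    InjOn G s ∧ Solv G s := by
  obtain ⟨x1, hx1s, hx1r, hα1⟩ := Sv1
  set α1 := ∑ v ∈ s1, x1 v with hα1d
  have hα1pos : (0:ℝ) < α1 := by linarith
  have hα1ne : α1 ≠ 0 := ne_of_gt hα1pos
  have hs1s : s1 ⊆ s := hu ▸ Finset.subset_union_left
  have hs2s : s2 ⊆ s := hu ▸ Finset.subset_union_right
  have hx1z2 : ∀ u ∈ s2, x1 u = 0 := fun u hu' => hx1s u (Finset.disjoint_right.mp hdj hu')
  have hu2n1 : u2 ∉ s1 := Finset.disjoint_right.mp hdj hu2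
  have hrow1 : ∀ (x : V → ℝ), ∀ v ∈ s1, rsum G s x v = rsum G s1 x v + ∑ u ∈ s2, x u := by
    intro x v hv
    rw [rsum_split hu hdj, rsum_all (fun b hb => hcross v hv b hb)]
  have hrow2 : ∀ (x : V → ℝ), ∀ v ∈ s2, rsum G s x v = (∑ u ∈ s1, x u) + rsum G s2 x v := by
    intro x v hv
    rw [rsum_split hu hdj, rsum_all (fun b hb => (hcross b hb v hv).symm)]
  constructor
  · intro x hx
    set T1 := ∑ u ∈ s1, x u with hT1d
    set T2 := ∑ u ∈ s2, x u with hT2d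
    have hT10 : T1 = 0 := by
      have h0 := hx u2 (hs2s hu2)
      rw [hrow2 x u2 hu2, rsum_none hiso2] at h0
      linarith
    have key1 : ∀ v ∈ s1, x v = -T2 * x1 v := by
      have hz := I1 (x + T2 • x1) ?_
      · intro v hv
        have := hz v hv
        simp only [Pi.add_apply, Pi.smul_apply, smul_eq_mul] at this
        linarith
      · intro v hv
        rw [rsum_add, rsum_smul, hx1r v hv]
        have h0 := hx v (hs1s hv)
        rw [hrow1 x v hv] at h0
        linarith
    have eT1 : T1 = -T2 * α1 := by
      rw [hT1d, Finset.sum_congr rfl key1, hα1d, ← Finset.mul_sum]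
    have hT20 : T2 = 0 := by
      rw [hT10] at eT1
      rcases mul_eq_zero.mp eT1.symm with h | h
      · linarith [neg_eq_zero.mp h]
      · exact absurd h hα1ne
    have hz2 : ∀ v ∈ s2.erase u2, x v = 0 := by
      apply I2'
      intro v hv
      have hv2 : v ∈ s2 := Finset.mem_of_mem_erase hv
      have h0 := hx v (hs2s hv2)
      rw [hrow2 x v hv2, rsum_erase (t := s2) (u := u2) (v := v) (fun ha => hiso2 v hv2 ha.symm) x] at h0
      linarith
    have hxu2 : x u2 = 0 := by
      have := Finset.add_sum_erase s2 x hu2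
      rw [Finset.sum_eq_zero hz2] at this
      rw [hT2d] at hT20
      linarith
    intro v hv
    rcases Finset.mem_union.mp (hu ▸ hv) with h | h
    · rw [key1 v h, hT20]; ring
    · by_cases hvu : v = u2
      · rw [hvu]; exact hxu2
      · exact hz2 v (Finset.mem_erase.mpr ⟨hvu, h⟩)
  · set c1 := 1 / α1 with hc1d
    set ξ := 1 - 1 / α1 with hξd
    refine ⟨c1 • x1 + ξ • ind u2, ?_, ?_, ?_⟩
    · intro v hv
      simp only [Pi.add_apply, Pi.smul_apply, smul_eq_mul]
      rw [hx1s v (fun h => hv (hs1s h)), ind_zero (u := u2) (v := v) (by rintro rfl; exact hv (hs2s hu2))]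
      ring
    · intro v hv
      rcases Finset.mem_union.mp (hu ▸ hv) with h | h
      · rw [hrow1 _ v h, rsum_add, rsum_smul, rsum_smul, hx1r v h,
          rsum_zero _ (fun u hu' => ind_zero (u := u2) (v := u) (by rintro rfl; exact hu2n1 hu'))]
        have e2 : ∑ u ∈ s2, (c1 • x1 + ξ • ind u2) u = ξ := by
          simp only [Pi.add_apply, Pi.smul_apply, smul_eq_mul]
          rw [Finset.sum_add_distrib, ← Finset.mul_sum, ← Finset.mul_sum,
            Finset.sum_eq_zero hx1z2, sum_ind hu2]
          ring
        rw [e2, hξd]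
        ring
      · rw [hrow2 _ v h, rsum_add, rsum_smul, rsum_smul,
          rsum_zero _ hx1z2, rsum_ind v (fun ha => hiso2 v h ha.symm)]
        have e1 : ∑ u ∈ s1, (c1 • x1 + ξ • ind u2) u = c1 * α1 := by
          simp only [Pi.add_apply, Pi.smul_apply, smul_eq_mul]
          rw [Finset.sum_add_distrib, ← Finset.mul_sum, ← Finset.mul_sum,
            Finset.sum_eq_zero (fun u hu' => ind_zero (u := u2) (v := u) (by rintro rfl; exact hu2n1 hu')), hα1d]
          ring
        rw [e1, hc1d]
        field_simp
        ring
    · have e : ∑ v ∈ s, (c1 • x1 + ξ • ind u2) v = c1 * α1 + ξ := by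
        simp only [Pi.add_apply, Pi.smul_apply, smul_eq_mul]
        rw [Finset.sum_add_distrib, ← Finset.mul_sum, ← Finset.mul_sum,
          sum_extend hs1s x1 hx1s, hα1d, sum_extend hs2s (ind u2)
            (fun v hv => ind_zero (u := u2) (v := v) (by rintro rfl; exact hv hu2)), sum_ind hu2]
        ring
      rw [e, hc1d, hξd]
      have h1 : 1 / α1 < 1 := by rw [div_lt_one hα1pos]; exact hα1
      have h2 : (1:ℝ) / α1 * α1 = 1 := by field_simp
      linarith

lemma join_BB (hu : s1 ∪ s2 = s) (hdj : Disjoint s1 s2)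
    (hcross : ∀ a ∈ s1, ∀ b ∈ s2, G.Adj a b)
    {u1 : V} (hu1 : u1 ∈ s1) (hiso1 : ∀ w ∈ s1, ¬G.Adj u1 w)
    (I1' : InjOn G (s1.erase u1))
    {u2 : V} (hu2 : u2 ∈ s2) (hiso2 : ∀ w ∈ s2, ¬G.Adj u2 w)
    (I2' : InjOn G (s2.erase u2)) :
    InjOn G s ∧ Solv G s := by
  have hs1s : s1 ⊆ s := hu ▸ Finset.subset_union_left
  have hs2s : s2 ⊆ s := hu ▸ Finset.subset_union_right
  have hu2n1 : u2 ∉ s1 := Finset.disjoint_right.mp hdj hu2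
  have hu1n2 : u1 ∉ s2 := Finset.disjoint_left.mp hdj hu1
  have hrow1 : ∀ (x : V → ℝ), ∀ v ∈ s1, rsum G s x v = rsum G s1 x v + ∑ u ∈ s2, x u := by
    intro x v hv
    rw [rsum_split hu hdj, rsum_all (fun b hb => hcross v hv b hb)]
  have hrow2 : ∀ (x : V → ℝ), ∀ v ∈ s2, rsum G s x v = (∑ u ∈ s1, x u) + rsum G s2 x v := by
    intro x v hv
    rw [rsum_split hu hdj, rsum_all (fun b hb => (hcross b hb v hv).symm)]
  constructor
  · intro x hx
    have hT20 : ∑ u ∈ s2, x u = 0 := by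
      have h0 := hx u1 (hs1s hu1)
      rw [hrow1 x u1 hu1, rsum_none hiso1] at h0
      linarith
    have hT10 : ∑ u ∈ s1, x u = 0 := by
      have h0 := hx u2 (hs2s hu2)
      rw [hrow2 x u2 hu2, rsum_none hiso2] at h0
      linarith
    have hz1 : ∀ v ∈ s1.erase u1, x v = 0 := by
      apply I1'
      intro v hv
      have hv1 : v ∈ s1 := Finset.mem_of_mem_erase hv
      have h0 := hx v (hs1s hv1)
      rw [hrow1 x v hv1, rsum_erase (t := s1) (u := u1) (v := v) (fun ha => hiso1 v hv1 ha.symm) x] at h0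
      linarith
    have hz2 : ∀ v ∈ s2.erase u2, x v = 0 := by
      apply I2'
      intro v hv
      have hv2 : v ∈ s2 := Finset.mem_of_mem_erase hv
      have h0 := hx v (hs2s hv2)
      rw [hrow2 x v hv2, rsum_erase (t := s2) (u := u2) (v := v) (fun ha => hiso2 v hv2 ha.symm) x] at h0
      linarith
    have hxu1 : x u1 = 0 := by
      have := Finset.add_sum_erase s1 x hu1
      rw [Finset.sum_eq_zero hz1] at this
      linarith
    have hxu2 : x u2 = 0 := by
      have := Finset.add_sum_erase s2 x hu2
      rw [Finset.sum_eq_zero hz2] at this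
      linarith
    intro v hv
    rcases Finset.mem_union.mp (hu ▸ hv) with h | h
    · by_cases hvu : v = u1
      · rw [hvu]; exact hxu1
      · exact hz1 v (Finset.mem_erase.mpr ⟨hvu, h⟩)
    · by_cases hvu : v = u2
      · rw [hvu]; exact hxu2
      · exact hz2 v (Finset.mem_erase.mpr ⟨hvu, h⟩)
  · refine ⟨ind u1 + ind u2, ?_, ?_, ?_⟩
    · intro v hv
      simp only [Pi.add_apply]
      rw [ind_zero (u := u1) (v := v) (by rintro rfl; exact hv (hs1s hu1)), ind_zero (u := u2) (v := v) (by rintro rfl; exact hv (hs2s hu2))]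
      ring
    · intro v hv
      rcases Finset.mem_union.mp (hu ▸ hv) with h | h
      · rw [hrow1 _ v h, rsum_add, rsum_ind v (fun ha => hiso1 v h ha.symm),
          rsum_zero _ (fun u hu' => ind_zero (u := u2) (v := u) (by rintro rfl; exact hu2n1 hu'))]
        simp only [Pi.add_apply]
        rw [Finset.sum_add_distrib,
          Finset.sum_eq_zero (fun u hu' => ind_zero (u := u1) (v := u) (by rintro rfl; exact hu1n2 hu')),
          sum_ind hu2]
        ring
      · rw [hrow2 _ v h, rsum_add, rsum_ind v (fun ha => hiso2 v h ha.symm),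
          rsum_zero _ (fun u hu' => ind_zero (u := u1) (v := u) (by rintro rfl; exact hu1n2 hu'))]
        simp only [Pi.add_apply]
        rw [Finset.sum_add_distrib,
          Finset.sum_eq_zero (fun u hu' => ind_zero (u := u2) (v := u) (by rintro rfl; exact hu2n1 hu')),
          sum_ind hu1]
        ring
    · simp only [Pi.add_apply]
      rw [Finset.sum_add_distrib, sum_extend hs1s (ind u1)
          (fun v hv => ind_zero (u := u1) (v := v) (by rintro rfl; exact hv hu1)), sum_ind hu1,
        sum_extend hs2s (ind u2)
          (fun v hv => ind_zero (u := u2) (v := v) (by rintro rfl; exact hv hu2)), sum_ind hu2]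
      norm_num
end Assembly2

section Master
variable {V : Type*} [Fintype V] {G : SimpleGraph V}

lemma master (hP4 : P4Free G) :
    ∀ (n : ℕ) (s : Finset V), s.card = n → s.Nonempty →
    (∀ v ∈ s, ∃ u ∈ s, G.Adj v u) →
    (∀ v ∈ s, ∀ w ∈ s, (∀ u ∈ s, (G.Adj v u ↔ G.Adj w u)) → v = w) →
    InjOn G s ∧ Solv G s := by
  intro n
  induction n using Nat.strong_induction_on with
  | _ n ih =>
  intro s hcard hne hiso htf
  by_cases h1 : s.card ≤ 1
  · exfalso
    obtain ⟨v, hv⟩ := hne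
    have hs : s = {v} := by
      apply Finset.eq_singleton_iff_unique_mem.mpr
      refine ⟨hv, fun w hw => ?_⟩
      by_contra hne'
      have : 2 ≤ s.card := Finset.one_lt_card.mpr ⟨w, hw, v, hv, hne'⟩
      omega
    obtain ⟨u, hu', hadj⟩ := hiso v hv
    rw [hs, Finset.mem_singleton] at hu'
    exact G.irrefl (hu' ▸ hadj)
  push_neg at h1
  rcases finset_partition G hP4 s h1 with ⟨s1, s2, hu, hdj, h1n, h2n, hcross⟩ |
    ⟨s1, s2, hu, hdj, h1n, h2n, hcross⟩
  · -- UNION case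
    have hs1s : s1 ⊆ s := hu ▸ Finset.subset_union_left
    have hs2s : s2 ⊆ s := hu ▸ Finset.subset_union_right
    have hcross' : ∀ a ∈ s2, ∀ b ∈ s1, ¬G.Adj a b :=
      fun a ha b hb hadj => hcross b hb a ha hadj.symm
    have hrow1 : ∀ (x : V → ℝ), ∀ v ∈ s1, rsum G s x v = rsum G s1 x v := by
      intro x v hv
      rw [rsum_split hu hdj, rsum_none (hcross v hv), add_zero]
    have hrow2 : ∀ (x : V → ℝ), ∀ v ∈ s2, rsum G s x v = rsum G s2 x v := by
      intro x v hv
      rw [rsum_split hu hdj, rsum_none (hcross' v hv), zero_add]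
    have hcard1 : s1.card < n := by
      rw [← hcard, ← hu, Finset.card_union_of_disjoint hdj]
      have := Finset.card_pos.mpr h2n
      omega
    have hcard2 : s2.card < n := by
      rw [← hcard, ← hu, Finset.card_union_of_disjoint hdj]
      have := Finset.card_pos.mpr h1n
      omega
    have hmem : ∀ v ∈ s, v ∈ s1 ∨ v ∈ s2 := fun v hv => Finset.mem_union.mp (hu ▸ hv)
    have hiso1 : ∀ v ∈ s1, ∃ u ∈ s1, G.Adj v u := by
      intro v hv
      obtain ⟨u, hus, hadj⟩ := hiso v (hs1s hv)
      rcases hmem u hus with h | h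
      · exact ⟨u, h, hadj⟩
      · exact absurd hadj (hcross v hv u h)
    have hiso2 : ∀ v ∈ s2, ∃ u ∈ s2, G.Adj v u := by
      intro v hv
      obtain ⟨u, hus, hadj⟩ := hiso v (hs2s hv)
      rcases hmem u hus with h | h
      · exact absurd hadj (hcross' v hv u h)
      · exact ⟨u, h, hadj⟩
    have htf1 : ∀ v ∈ s1, ∀ w ∈ s1, (∀ u ∈ s1, (G.Adj v u ↔ G.Adj w u)) → v = w := by
      intro v hv w hw hiff
      apply htf v (hs1s hv) w (hs1s hw)
      intro u hu'
      rcases hmem u hu' with h | h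
      · exact hiff u h
      · exact iff_of_false (hcross v hv u h) (hcross w hw u h)
    have htf2 : ∀ v ∈ s2, ∀ w ∈ s2, (∀ u ∈ s2, (G.Adj v u ↔ G.Adj w u)) → v = w := by
      intro v hv w hw hiff
      apply htf v (hs2s hv) w (hs2s hw)
      intro u hu'
      rcases hmem u hu' with h | h
      · exact iff_of_false (hcross' v hv u h) (hcross' w hw u h)
      · exact hiff u h
    obtain ⟨I1, Sv1⟩ := ih s1.card hcard1 s1 rfl h1n hiso1 htf1
    obtain ⟨I2, Sv2⟩ := ih s2.card hcard2 s2 rfl h2n hiso2 htf2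
    constructor
    · intro x hx v hv
      rcases hmem v hv with h | h
      · refine I1 x (fun v' hv' => ?_) v h
        rw [← hrow1 x v' hv']
        exact hx v' (hs1s hv')
      · refine I2 x (fun v' hv' => ?_) v h
        rw [← hrow2 x v' hv']
        exact hx v' (hs2s hv')
    · obtain ⟨x1, hx1s, hx1r, hα1⟩ := Sv1
      obtain ⟨x2, hx2s, hx2r, hα2⟩ := Sv2
      have hx2z1 : ∀ u ∈ s1, x2 u = 0 := fun u hu' => hx2s u (Finset.disjoint_left.mp hdj hu')
      have hx1z2 : ∀ u ∈ s2, x1 u = 0 := fun u hu' => hx1s u (Finset.disjoint_right.mp hdj hu')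
      refine ⟨x1 + x2, ?_, ?_, ?_⟩
      · intro v hv
        simp only [Pi.add_apply]
        rw [hx1s v (fun h => hv (hs1s h)), hx2s v (fun h => hv (hs2s h))]
        ring
      · intro v hv
        rcases hmem v hv with h | h
        · rw [hrow1 _ v h, rsum_add, hx1r v h, rsum_zero _ hx2z1]
          ring
        · rw [hrow2 _ v h, rsum_add, hx2r v h, rsum_zero _ hx1z2]
          ring
      · simp only [Pi.add_apply]
        rw [Finset.sum_add_distrib, sum_extend hs1s x1 hx1s, sum_extend hs2s x2 hx2s]
        linarith
  · -- JOIN case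
    have part : ∀ t o : Finset V, t ∪ o = s → Disjoint t o → t.Nonempty → o.Nonempty →
        (∀ a ∈ t, ∀ b ∈ o, G.Adj a b) →
        (InjOn G t ∧ Solv G t) ∨
        (∃ u ∈ t, (∀ w ∈ t, ¬G.Adj u w) ∧ InjOn G (t.erase u)) := by
      intro t o hto hdto htn hon hcr
      have htsub : t ⊆ s := hto ▸ Finset.subset_union_left
      have htcard : t.card < n := by
        rw [← hcard, ← hto, Finset.card_union_of_disjoint hdto]
        have := Finset.card_pos.mpr hon
        omega
      have htf' : ∀ v ∈ t, ∀ w ∈ t, (∀ u ∈ t, (G.Adj v u ↔ G.Adj w u)) → v = w := by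
        intro v hv w hw hiff
        apply htf v (htsub hv) w (htsub hw)
        intro u hu'
        rcases Finset.mem_union.mp (hto ▸ hu') with h | h
        · exact hiff u h
        · exact iff_of_true (hcr v hv u h) (hcr w hw u h)
      by_cases hi : ∃ u ∈ t, ∀ w ∈ t, ¬G.Adj u w
      · right
        obtain ⟨u, hut, hiso'⟩ := hi
        refine ⟨u, hut, hiso', ?_⟩
        rcases (t.erase u).eq_empty_or_nonempty with he | hne'
        · rw [he]
          intro x hx v hv
          exact absurd hv (Finset.notMem_empty v)
        · have hcard' : (t.erase u).card < n := by
            have := Finset.card_erase_lt_of_mem hut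
            omega
          refine (ih _ hcard' _ rfl hne' ?_ ?_).1
          · intro v hv
            have hvt : v ∈ t := Finset.mem_of_mem_erase hv
            have hvne : v ≠ u := (Finset.mem_erase.mp hv).1
            by_cases hvi : ∀ w ∈ t, ¬G.Adj v w
            · exact absurd
                (htf' v hvt u hut (fun w hw => iff_of_false (hvi w hw) (hiso' w hw))) hvne
            · push_neg at hvi
              obtain ⟨w, hw, hadj⟩ := hvi
              have hwu : w ≠ u := by rintro rfl; exact hiso' v hvt hadj.symm
              exact ⟨w, Finset.mem_erase.mpr ⟨hwu, hw⟩, hadj⟩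
          · intro v hv w hw hiff
            apply htf' v (Finset.mem_of_mem_erase hv) w (Finset.mem_of_mem_erase hw)
            intro u' hu'
            by_cases h : u' = u
            · subst h
              exact iff_of_false (fun ha => hiso' v (Finset.mem_of_mem_erase hv) ha.symm)
                (fun ha => hiso' w (Finset.mem_of_mem_erase hw) ha.symm)
            · exact hiff u' (Finset.mem_erase.mpr ⟨h, hu'⟩)
      · left
        push_neg at hi
        exact ih _ htcard t rfl htn hi htf'
    have hu' : s2 ∪ s1 = s := by rw [Finset.union_comm]; exact hu
    have hcross' : ∀ a ∈ s2, ∀ b ∈ s1, G.Adj a b := fun a ha b hb => (hcross b hb a ha).symm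
    rcases part s1 s2 hu hdj h1n h2n hcross with ⟨I1, Sv1⟩ | ⟨u1, hu1, hisou1, I1'⟩
    · rcases part s2 s1 hu' hdj.symm h2n h1n hcross' with ⟨I2, Sv2⟩ | ⟨u2, hu2, hisou2, I2'⟩
      · exact join_AA hu hdj hcross I1 Sv1 I2 Sv2
      · exact join_AB hu hdj hcross I1 Sv1 hu2 hisou2 I2'
    · rcases part s2 s1 hu' hdj.symm h2n h1n hcross' with ⟨I2, Sv2⟩ | ⟨u2, hu2, hisou2, I2'⟩
      · exact join_AB hu' hdj.symm hcross' I2 Sv2 hu1 hisou1 I1'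
      · exact join_BB hu hdj hcross hu1 hisou1 I1' hu2 hisou2 I2'
end Master

section Final
open Matrix
variable {V : Type*} [Fintype V]

set_option maxHeartbeats 2000000 in
theorem cograph_rank_eq_distinct_nonzero_rows' (G : SimpleGraph V) (hP4 : P4Free G) :
    (adjM G).rank = ((Set.range fun v => adjM G v) \ {0}).ncard := by
  classical
  set A : Matrix V V ℝ := adjM G with hAdef
  have hAapp : ∀ v w : V, A v w = if G.Adj v w then 1 else 0 := fun v w => rfl
  set R : Set (V → ℝ) := (Set.range fun v => A v) \ {0} with hRdef
  have hAT : Aᵀ = A := SimpleGraph.transpose_adjMatrix G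
  have hrank : A.rank = Module.finrank ℝ (Submodule.span ℝ (Set.range fun v => A v)) := by
    have hcol : A.col = fun v => A v := by funext v w; exact congrFun (congrFun hAT v) w
    rw [Matrix.rank, Matrix.range_mulVecLin, hcol]
  rcases R.eq_empty_or_nonempty with hRe | hRne
  · -- all rows are zero
    have hA0 : A = 0 := by
      funext v w
      have hv : A v ∈ ({0} : Set (V → ℝ)) := by
        by_contra h0
        exact (Set.eq_empty_iff_forall_notMem.mp hRe (A v)) ⟨⟨v, rfl⟩, h0⟩
      have : A v = 0 := hv
      rw [this]
      rfl
    rw [hRe, hA0]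
    simp
  · -- there is a nonzero row
    have hRfin : R.Finite := (Set.finite_range _).diff
    obtain ⟨r0, hr0⟩ := hRne
    obtain ⟨v0, -⟩ := hr0.1
    set rep : (V → ℝ) → V := fun r => if h : ∃ v, A v = r then h.choose else v0 with hrepd
    have hrep : ∀ r ∈ R, A (rep r) = r := by
      intro r hr
      obtain ⟨v, hv⟩ := hr.1
      rw [hrepd]
      simp only []
      rw [dif_pos ⟨v, hv⟩]
      exact (⟨v, hv⟩ : ∃ v, A v = r).choose_spec
    set S : Finset V := hRfin.toFinset.image rep with hSdef
    have hmemS : ∀ v, v ∈ S ↔ ∃ r ∈ R, rep r = v := by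
      intro v
      rw [hSdef, Finset.mem_image]
      constructor
      · rintro ⟨r, hr, hrv⟩
        exact ⟨r, hRfin.mem_toFinset.mp hr, hrv⟩
      · rintro ⟨r, hr, hrv⟩
        exact ⟨r, hRfin.mem_toFinset.mpr hr, hrv⟩
    have hrowS : ∀ v ∈ S, A v ∈ R := by
      intro v hv
      obtain ⟨r, hr, hrv⟩ := (hmemS v).mp hv
      rw [← hrv, hrep r hr]
      exact hr
    have hrowinj : ∀ v ∈ S, ∀ w ∈ S, A v = A w → v = w := by
      intro v hv w hw hvw
      obtain ⟨r, hr, hrv⟩ := (hmemS v).mp hv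
      obtain ⟨r', hr', hrv'⟩ := (hmemS w).mp hw
      have : r = r' := by rw [← hrep r hr, ← hrep r' hr', hrv, hrv', hvw]
      rw [← hrv, ← hrv', this]
    have hScard : S.card = R.ncard := by
      rw [hSdef, Finset.card_image_of_injOn, Set.ncard_eq_toFinset_card R hRfin]
      intro r hr r' hr' hrr
      rw [← hrep r (hRfin.mem_toFinset.mp hr), ← hrep r' (hRfin.mem_toFinset.mp hr'), hrr]
    -- basic adjacency helpers
    have hrownz : ∀ {u v : V}, G.Adj v u → A u ∈ R := by
      intro u v h
      refine ⟨⟨u, rfl⟩, fun h0 => ?_⟩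
      have e : A u v = 0 := by rw [show A u = 0 from h0]; rfl
      rw [hAapp, if_pos h.symm] at e
      exact one_ne_zero e
    have hadj_eq : ∀ {u u' v : V}, A u' = A u → G.Adj v u → G.Adj v u' := by
      intro u u' v h ha
      have e := congrFun h v
      rw [hAapp, hAapp, if_pos ha.symm] at e
      by_contra hn
      rw [if_neg (fun hx => hn hx.symm)] at e
      exact zero_ne_one e
    have hnadj_eq : ∀ {u u' v : V}, A u' = A u → ¬G.Adj v u → ¬G.Adj v u' := by
      intro u u' v h ha hx
      have e := congrFun h v
      rw [hAapp, hAapp, if_pos hx.symm, if_neg (fun hy => ha hy.symm)] at e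
      exact one_ne_zero e
    have hrepS : ∀ {u v : V}, G.Adj v u → rep (A u) ∈ S ∧ A (rep (A u)) = A u := by
      intro u v h
      have hm := hrownz h
      exact ⟨(hmemS _).mpr ⟨A u, hm, rfl⟩, hrep _ hm⟩
    -- the master lemma hypotheses
    have hSne : S.Nonempty := by
      refine ⟨rep r0, (hmemS _).mpr ⟨r0, hr0, rfl⟩⟩
    have hisoS : ∀ v ∈ S, ∃ u ∈ S, G.Adj v u := by
      intro v hv
      have hvR := hrowS v hv
      have : A v ≠ 0 := hvR.2
      obtain ⟨w, hw⟩ := Function.ne_iff.mp this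
      have hadj : G.Adj v w := by
        by_contra hn
        exact hw (by rw [hAapp, if_neg hn]; rfl)
      obtain ⟨hw1, hw2⟩ := hrepS hadj
      exact ⟨rep (A w), hw1, hadj_eq hw2 hadj⟩
    have htfS : ∀ v ∈ S, ∀ w ∈ S, (∀ u ∈ S, (G.Adj v u ↔ G.Adj w u)) → v = w := by
      intro v hv w hw hiff
      by_contra hne'
      have hrowne : A v ≠ A w := fun h => hne' (hrowinj v hv w hw h)
      obtain ⟨u, hu⟩ := Function.ne_iff.mp hrowne
      by_cases hadj : G.Adj v u
      · have hnw : ¬G.Adj w u := by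
          intro hx
          exact hu (by rw [hAapp, hAapp, if_pos hadj, if_pos hx])
        obtain ⟨hu1, hu2⟩ := hrepS hadj
        exact (hnadj_eq hu2 hnw) ((hiff _ hu1).mp (hadj_eq hu2 hadj))
      · have hw' : G.Adj w u := by
          by_contra hx
          exact hu (by rw [hAapp, hAapp, if_neg hadj, if_neg hx])
        obtain ⟨hu1, hu2⟩ := hrepS hw'
        exact (hnadj_eq hu2 hadj) ((hiff _ hu1).mpr (hadj_eq hu2 hw'))
    obtain ⟨InjS, -⟩ := master hP4 S.card S rfl hSne hisoS htfS
    -- upper bound : rank ≤ ncard R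
    have hupper : A.rank ≤ R.ncard := by
      rw [hrank]
      have hsub : (Set.range fun v => A v) ⊆ insert 0 R := by
        rintro r ⟨v, rfl⟩
        by_cases h : A v = 0
        · exact Set.mem_insert_iff.mpr (Or.inl h)
        · exact Set.mem_insert_iff.mpr (Or.inr ⟨⟨v, rfl⟩, h⟩)
      have h1 : Submodule.span ℝ (Set.range fun v => A v) ≤ Submodule.span ℝ R :=
        le_trans (Submodule.span_mono hsub) (le_of_eq Submodule.span_insert_zero)
      refine le_trans (Submodule.finrank_mono h1) ?_
      haveI := hRfin.fintype
      have h3 : Module.finrank ℝ (Submodule.span ℝ R) ≤ R.toFinset.card :=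
        finrank_span_le_card R
      rw [Set.ncard_eq_toFinset_card' R]
      exact h3
    -- lower bound : ncard R = S.card ≤ rank
    have hlower : S.card ≤ A.rank := by
      set f : ↥S → (V → ℝ) := fun s => A ↑s with hfd
      have hLI : LinearIndependent ℝ f := by
        apply LinearIndependent.of_comp (LinearMap.funLeft ℝ ℝ (Subtype.val : ↥S → V))
        rw [Fintype.linearIndependent_iff]
        intro c hc
        set x : V → ℝ := fun v => if h : v ∈ S then c ⟨v, h⟩ else 0 with hxd
        have hrows : ∀ v ∈ S, rsum G S x v = 0 := by
          intro v hv
          have e := congrFun hc (⟨v, hv⟩ : ↥S)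
          simp only [Finset.sum_apply, Pi.smul_apply, Pi.zero_apply, Function.comp_apply,
            LinearMap.funLeft_apply, smul_eq_mul] at e
          have step : rsum G S x v = ∑ s : {u // u ∈ S}, c s * f s v := by
            rw [rsum, Finset.sum_filter,
              ← Finset.sum_attach S (fun u => if G.Adj v u then x u else 0)]
            apply Finset.sum_congr rfl
            intro s _
            rw [hfd]
            simp only []
            rw [hAapp, hxd]
            simp only [dif_pos s.2]
            by_cases hadj : G.Adj v ↑s
            · rw [if_pos hadj, if_pos hadj.symm, mul_one]
            · rw [if_neg hadj, if_neg (fun hx => hadj hx.symm), mul_zero]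
          rw [step]
          exact e
        have hz := InjS x hrows
        intro i
        have := hz ↑i i.2
        rw [hxd] at this
        simpa [dif_pos i.2] using this
      have hmemrange : ∀ s : ↥S, f s ∈ LinearMap.range A.mulVecLin := by
        intro s
        refine ⟨Pi.single (↑s : V) 1, ?_⟩
        have := A.mulVec_single_one (↑s : V)
        rw [Matrix.mulVecLin_apply]
        rw [show A *ᵥ Pi.single (↑s : V) 1 = Aᵀ ↑s from ?_]
        · rw [hAT, hfd]
        · ext w
          rw [Matrix.mulVec_single_one]
          rfl
      set f' : ↥S → LinearMap.range A.mulVecLin := fun s => ⟨f s, hmemrange s⟩ with hf'd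
      have hLI' : LinearIndependent ℝ f' := by
        apply LinearIndependent.of_comp (LinearMap.range A.mulVecLin).subtype
        exact hLI
      have := hLI'.fintype_card_le_finrank
      rwa [Fintype.card_coe] at this
    omega
end Final


/-- Sillke's conjecture: the rank of the adjacency matrix of a cograph equals the
number of its distinct nonzero rows. -/
theorem cograph_rank_eq_distinct_nonzero_rows {V : Type*} [Fintype V]
    (G : SimpleGraph V) (hG : IsCograph G) :
    (adjM G).rank = ((Set.range fun v => adjM G v) \ {0}).ncard :=
  cograph_rank_eq_distinct_nonzero_rows' G (isCograph_p4free G hG)
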